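/- Let Z be a metric space written as a finite union of closed subsets Z = Z_1 ∪ ... ∪ Z_k. If each Z_i (with the induced metric) has capacity dimension at most n, then Z has capacity dimension at most n. -/

import Mathlib

open Set

/-- `Z` has capacity dimension at most `m`. -/
def CapacityDimLE (Z : Type*) [MetricSpace Z] (m : ℕ) : Prop :=
  ∃ C : ℝ, 0 < C ∧ ∃ s0 : ℝ, 0 < s0 ∧ ∀ s : ℝ, 0 < s → s < s0 →
    ∃ 𝒰 : Set (Set Z), ⋃₀ 𝒰 = Set.univ ∧
      (∀ U ∈ 𝒰, EMetric.diam U < ENNReal.ofReal (C * s)) ∧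
      (∀ z : Z, {U ∈ 𝒰 | ∃ u ∈ U, dist z u < s}.encard ≤ (m + 1 : ℕ∞))

namespace CapUnionAux

variable {Z : Type*} [MetricSpace Z]

/-- Colored version of capacity dimension: `n+1` families of `r`-separated sets
of diameter `≤ c*r`, covering `S`. -/
def ColoredDimLE (S : Set Z) (n : ℕ) : Prop :=
  ∃ c : ℝ, 0 < c ∧ ∃ r0 : ℝ, 0 < r0 ∧ ∀ r : ℝ, 0 < r → r < r0 →
    ∃ 𝒲 : Fin (n+1) → Set (Set Z),
      (∀ i, ∀ W ∈ 𝒲 i, W ⊆ S ∧ EMetric.diam W ≤ ENNReal.ofReal (c * r)) ∧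
      (∀ i, ∀ W ∈ 𝒲 i, ∀ W' ∈ 𝒲 i, W ≠ W' → ∀ w ∈ W, ∀ w' ∈ W', r ≤ dist w w') ∧
      S ⊆ ⋃ i, ⋃₀ 𝒲 i

theorem colored_empty (n : ℕ) : ColoredDimLE (∅ : Set Z) n :=
  ⟨1, one_pos, 1, one_pos, fun r hr _ => ⟨fun _ => ∅, by simp, by simp, by simp⟩⟩

theorem colored_union {A B : Set Z} {n : ℕ} (hA : ColoredDimLE A n) (hB : ColoredDimLE B n) :
    ColoredDimLE (A ∪ B) n := by
  obtain ⟨cA, hcA, rA0, hrA0, HA⟩ := hA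
  obtain ⟨cB, hcB, rB0, hrB0, HB⟩ := hB
  have h3 : (0:ℝ) < 3 + 2*cA := by positivity
  refine ⟨cB*(3+2*cA)+2+2*cA, by positivity, min rA0 (rB0/(3+2*cA)), by positivity, ?_⟩
  intro r hr hrr
  obtain ⟨𝒜, hAdiam, hAsep, hAcov⟩ := HA r hr (lt_of_lt_of_le hrr (min_le_left _ _))
  have hrB0' : r < rB0/(3+2*cA) := lt_of_lt_of_le hrr (min_le_right _ _)
  obtain ⟨ℬ, hBdiam, hBsep, hBcov⟩ := HB ((3+2*cA)*r) (by positivity)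
    (by rw [lt_div_iff₀ h3] at hrB0'; linarith)
  set c := cB*(3+2*cA)+2+2*cA with hc
  set rB := (3+2*cA)*r with hrBdef
  -- distance bound inside a set of a family
  have hdistA : ∀ i, ∀ U ∈ 𝒜 i, ∀ x ∈ U, ∀ y ∈ U, dist x y ≤ cA * r := by
    intro i U hU x hx y hy
    have h1 := le_trans (EMetric.edist_le_diam_of_mem hx hy) (hAdiam i U hU).2
    exact (edist_le_ofReal (by positivity)).1 h1
  have hdistB : ∀ i, ∀ V ∈ ℬ i, ∀ x ∈ V, ∀ y ∈ V, dist x y ≤ cB * rB := by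
    intro i V hV x hx y hy
    have h1 := le_trans (EMetric.edist_le_diam_of_mem hx hy) (hBdiam i V hV).2
    exact (edist_le_ofReal (by positivity)).1 h1
  classical
  let near : Set Z → Set Z → Prop := fun U V => ∃ u ∈ U, ∃ v ∈ V, dist u v < r
  let big : Fin (n+1) → Set Z → Set Z := fun i V => V ∪ ⋃₀ {U | U ∈ 𝒜 i ∧ near U V}
  -- every point of `big i V` is within `(1+cA)*r` of a point of `V`
  have hbig : ∀ i, ∀ V ∈ ℬ i, ∀ w ∈ big i V, ∃ v ∈ V, dist w v ≤ (1+cA)*r := by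
    intro i V hV w hw
    rcases hw with hw | hw
    · exact ⟨w, hw, by simp [dist_self]; positivity⟩
    · rcases hw with ⟨U, ⟨hU, u, hu, v, hv, huv⟩, hwU⟩
      refine ⟨v, hv, ?_⟩
      have h1 : dist w u ≤ cA * r := hdistA i U hU w hwU u hu
      have := dist_triangle w u v
      linarith
  refine ⟨fun i => {W | (∃ V ∈ ℬ i, W = big i V) ∨ (W ∈ 𝒜 i ∧ ∀ V ∈ ℬ i, ¬ near W V)},
    ?_, ?_, ?_⟩
  · rintro i W (⟨V, hV, rfl⟩ | ⟨hW, -⟩)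
    · constructor
      · rintro z (hz | ⟨U, ⟨hU, -⟩, hzU⟩)
        · exact Or.inr ((hBdiam i V hV).1 hz)
        · exact Or.inl ((hAdiam i U hU).1 hzU)
      · refine EMetric.diam_le ?_
        intro x hx y hy
        obtain ⟨v, hv, hxv⟩ := hbig i V hV x hx
        obtain ⟨v', hv', hyv'⟩ := hbig i V hV y hy
        have h1 : dist v v' ≤ cB * rB := hdistB i V hV v hv v' hv'
        have h2 : dist x y ≤ c * r := by
          have t1 := dist_triangle x v y
          have t2 := dist_triangle v v' y
          have t3 : dist v' y = dist y v' := dist_comm _ _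
          rw [hc, hrBdef] at *
          nlinarith [dist_triangle x v v', dist_triangle x v' y]
        rw [edist_dist]
        exact le_trans (ENNReal.ofReal_le_ofReal h2) le_rfl
    · constructor
      · exact fun z hz => Or.inl ((hAdiam i W hW).1 hz)
      · refine le_trans (hAdiam i W hW).2 (ENNReal.ofReal_le_ofReal ?_)
        rw [hc]; nlinarith [mul_nonneg (mul_pos hcB h3).le hr.le, mul_nonneg hcA.le hr.le, hr.le]
  · rintro i W hWmem W' hW'mem hne w hw w' hw'
    rcases hWmem with ⟨V, hV, rfl⟩ | ⟨hW, hWfar⟩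
    · rcases hW'mem with ⟨V', hV', rfl⟩ | ⟨hW', hW'far⟩
      · -- two big sets
        have hVV' : V ≠ V' := by rintro rfl; exact hne rfl
        obtain ⟨v, hv, hwv⟩ := hbig i V hV w hw
        obtain ⟨v', hv', hwv'⟩ := hbig i V' hV' w' hw'
        have hsep := hBsep i V hV V' hV' hVV' v hv v' hv'
        have t := dist_triangle v w v'
        have t2 := dist_triangle w w' v'
        have : dist v' w' = dist w' v' := dist_comm _ _
        rw [hrBdef] at hsep
        nlinarith [dist_triangle v w w', dist_triangle w w' v', dist_comm w v]
      · -- big vs kept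
        rcases hw with hwV | ⟨U, ⟨hU, hUnear⟩, hwU⟩
        · by_contra hlt
          exact hW'far V hV ⟨w', hw', w, hwV, by rw [dist_comm]; linarith⟩
        · have hUW' : U ≠ W' := by
            rintro rfl; exact hW'far V hV hUnear
          exact hAsep i U hU W' hW' hUW' w hwU w' hw'
    · rcases hW'mem with ⟨V', hV', rfl⟩ | ⟨hW', hW'far⟩
      · rcases hw' with hw'V | ⟨U', ⟨hU', hU'near⟩, hw'U⟩
        · by_contra hlt
          exact hWfar V' hV' ⟨w, hw, w', hw'V, by linarith⟩
        · have hUW : W ≠ U' := by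
            rintro rfl; exact hWfar V' hV' hU'near
          exact hAsep i W hW U' hU' hUW w hw w' hw'U
      · have : W ≠ W' := hne
        exact hAsep i W hW W' hW' this w hw w' hw'
  · rintro z (hz | hz)
    · obtain ⟨T, ⟨i, rfl⟩, hT⟩ := hAcov hz
      obtain ⟨U, hU, hzU⟩ := hT
      by_cases hne : ∃ V ∈ ℬ i, near U V
      · obtain ⟨V, hV, hnear⟩ := hne
        refine mem_iUnion.2 ⟨i, ⟨big i V, Or.inl ⟨V, hV, rfl⟩, Or.inr ⟨U, ⟨hU, hnear⟩, hzU⟩⟩⟩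
      · push_neg at hne
        exact mem_iUnion.2 ⟨i, ⟨U, Or.inr ⟨hU, hne⟩, hzU⟩⟩
    · obtain ⟨T, ⟨i, rfl⟩, hT⟩ := hBcov hz
      obtain ⟨V, hV, hzV⟩ := hT
      exact mem_iUnion.2 ⟨i, ⟨big i V, Or.inl ⟨V, hV, rfl⟩, Or.inl hzV⟩⟩

theorem colored_of_cap {X : Type*} [MetricSpace X] {n : ℕ} (h : CapacityDimLE X n) :
    ColoredDimLE (univ : Set X) n := by
  obtain ⟨C, hC, s0, hs0, H⟩ := h
  have hn2 : (0:ℝ) < (n:ℝ)+2 := by positivity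
  refine ⟨(C+2)*((n:ℝ)+2), by positivity, s0/((n:ℝ)+2), by positivity, ?_⟩
  intro r hr hrr
  have hs : (0:ℝ) < ((n:ℝ)+2)*r := by positivity
  have hss : ((n:ℝ)+2)*r < s0 := by
    rw [lt_div_iff₀ hn2] at hrr; linarith
  obtain ⟨𝒰, hcov, hdiam, hmult⟩ := H (((n:ℝ)+2)*r) hs hss
  set s : ℝ := ((n:ℝ)+2)*r with hsdef
  set σ : ℝ → X → Set (Set X) :=
    fun t z => {U | U ∈ 𝒰 ∧ U.Nonempty ∧ ∃ u ∈ U, dist z u ≤ t} with hσdef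
  have hσmono : ∀ z, ∀ {t t' : ℝ}, t ≤ t' → σ t z ⊆ σ t' z := by
    rintro z t t' htt U ⟨h1, h2, u, hu, hd⟩
    exact ⟨h1, h2, u, hu, le_trans hd htt⟩
  have hσcard : ∀ (z : X) (t : ℝ), t < s → (σ t z).encard ≤ ((n:ℕ∞) + 1) := by
    intro z t ht
    refine le_trans (Set.encard_mono ?_) (hmult z)
    rintro U ⟨hU, -, u, hu, hd⟩
    exact ⟨hU, u, hu, lt_of_le_of_lt hd ht⟩
  have hσ0 : ∀ z : X, (σ 0 z).Nonempty := by
    intro z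
    have hz : z ∈ ⋃₀ 𝒰 := by rw [hcov]; trivial
    obtain ⟨U, hU, hzU⟩ := hz
    exact ⟨U, hU, ⟨z, hzU⟩, z, hzU, by simp⟩
  set L : X → Set ℕ := fun z => {j | 1 ≤ j ∧ (σ ((j:ℝ)*r) z).encard ≤ (j:ℕ∞)} with hLdef
  have hmemL : ∀ z, n+1 ∈ L z := by
    intro z
    refine ⟨by omega, ?_⟩
    have h1 : (((n+1:ℕ):ℝ))*r < s := by
      rw [hsdef]; push_cast; nlinarith
    have := hσcard z (((n+1:ℕ):ℝ)*r) h1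
    exact le_trans this (by push_cast; exact le_rfl)
  set ℓ : X → ℕ := fun z => sInf (L z) with hℓdef
  have hℓmem : ∀ z, ℓ z ∈ L z := fun z => Nat.sInf_mem ⟨n+1, hmemL z⟩
  have hℓ1 : ∀ z, 1 ≤ ℓ z := fun z => (hℓmem z).1
  have hℓle : ∀ z, ℓ z ≤ n+1 := fun z => Nat.sInf_le (hmemL z)
  have hlow : ∀ z, (ℓ z : ℕ∞) ≤ (σ (((ℓ z - 1 : ℕ):ℝ)*r) z).encard := by
    intro z
    rcases Nat.lt_or_ge 1 (ℓ z) with h2 | h1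
    · have hrfl : sInf (L z) = ℓ z := rfl
      have hnot : (ℓ z - 1) ∉ L z := Nat.notMem_of_lt_sInf (by omega)
      have h1le : 1 ≤ ℓ z - 1 := by omega
      have hnle : ¬ (σ (((ℓ z - 1:ℕ):ℝ)*r) z).encard ≤ ((ℓ z - 1 : ℕ):ℕ∞) :=
        fun hcon => hnot ⟨h1le, hcon⟩
      have hlt := lt_of_not_ge hnle
      have hle2 := Order.add_one_le_of_lt hlt
      refine le_trans (le_of_eq ?_) hle2
      have : ℓ z - 1 + 1 = ℓ z := by omega
      exact_mod_cast congrArg (Nat.cast : ℕ → ℕ∞) this.symm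
    · have he : ℓ z = 1 := le_antisymm h1 (hℓ1 z)
      rw [he]
      have h0 : (((1 - 1 : ℕ):ℝ))*r = 0 := by norm_num
      rw [h0]
      rw [show ((1:ℕ):ℕ∞) = 1 from rfl, Set.one_le_encard_iff_nonempty]
      exact hσ0 z
  have hfin : ∀ z, (σ (((ℓ z:ℕ):ℝ)*r) z).Finite := by
    intro z
    have := (hℓmem z).2
    exact Set.finite_of_encard_le_coe this
  have hkey : ∀ z, σ (((ℓ z - 1:ℕ):ℝ)*r) z = σ (((ℓ z:ℕ):ℝ)*r) z := by
    intro z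
    refine (hfin z).eq_of_subset_of_encard_le' (hσmono z ?_) (le_trans (hℓmem z).2 (hlow z))
    have : ((ℓ z - 1:ℕ):ℝ) ≤ ((ℓ z:ℕ):ℝ) := by exact_mod_cast Nat.sub_le _ _
    nlinarith
  -- separation core
  have hsubkey : ∀ z z' : X, ℓ z = ℓ z' → dist z z' < r →
      σ (((ℓ z:ℕ):ℝ)*r) z ⊆ σ (((ℓ z':ℕ):ℝ)*r) z' := by
    intro z z' hll hd U hU
    rw [← hkey z] at hU
    obtain ⟨hU𝒰, hUne, u, hu, hdu⟩ := hU
    refine ⟨hU𝒰, hUne, u, hu, ?_⟩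
    have h1 : (1:ℝ) ≤ (ℓ z : ℝ) := by exact_mod_cast hℓ1 z
    have hc : ((ℓ z - 1:ℕ):ℝ) = (ℓ z:ℝ) - 1 := by
      have := hℓ1 z
      push_cast [Nat.cast_sub this]
      ring
    rw [hc] at hdu
    have := dist_triangle z' z u
    rw [dist_comm z' z] at this
    rw [← hll]
    nlinarith
  -- the families
  refine ⟨fun i => {W | ∃ z0 : X, ℓ z0 = (i:ℕ)+1 ∧
      W = {z | ℓ z = (i:ℕ)+1 ∧ σ (((ℓ z:ℕ):ℝ)*r) z = σ (((ℓ z0:ℕ):ℝ)*r) z0}}, ?_, ?_, ?_⟩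
  · rintro i W ⟨z0, hz0, rfl⟩
    refine ⟨subset_univ _, ?_⟩
    obtain ⟨U, hU0⟩ := hσ0 z0
    have hU : U ∈ σ (((ℓ z0:ℕ):ℝ)*r) z0 := hσmono z0 (by positivity) hU0
    have hUmem : ∀ z, z ∈ {z | ℓ z = (i:ℕ)+1 ∧ σ (((ℓ z:ℕ):ℝ)*r) z = σ (((ℓ z0:ℕ):ℝ)*r) z0} →
        ∃ u ∈ U, dist z u ≤ (n:ℝ)*r := by
      rintro z ⟨hz1, hz2⟩
      have : U ∈ σ (((ℓ z - 1:ℕ):ℝ)*r) z := by rw [hkey z, hz2]; exact hU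
      obtain ⟨-, -, u, hu, hdu⟩ := this
      refine ⟨u, hu, le_trans hdu ?_⟩
      have hle : ((ℓ z - 1:ℕ):ℝ) ≤ (n:ℝ) := by
        have : ℓ z - 1 ≤ n := by have := hℓle z; omega
        exact_mod_cast this
      nlinarith
    refine EMetric.diam_le ?_
    intro x hx y hy
    obtain ⟨u, hu, hxu⟩ := hUmem x hx
    obtain ⟨u', hu', hyu'⟩ := hUmem y hy
    have hdU : EMetric.diam U ≤ ENNReal.ofReal (C*s) := (hdiam U hU.1).le
    calc edist x y ≤ edist x u + edist u u' + edist u' y := edist_triangle4 _ _ _ _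
      _ ≤ ENNReal.ofReal ((n:ℝ)*r) + ENNReal.ofReal (C*s) + ENNReal.ofReal ((n:ℝ)*r) := by
          refine add_le_add (add_le_add ?_ ?_) ?_
          · rw [edist_dist]; exact ENNReal.ofReal_le_ofReal hxu
          · exact le_trans (EMetric.edist_le_diam_of_mem hu hu') hdU
          · rw [edist_dist, dist_comm]; exact ENNReal.ofReal_le_ofReal hyu'
      _ ≤ ENNReal.ofReal ((C+2)*((n:ℝ)+2)*r) := by
          rw [← ENNReal.ofReal_add (by positivity) (by positivity),
            ← ENNReal.ofReal_add (by positivity) (by positivity)]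
          refine ENNReal.ofReal_le_ofReal ?_
          rw [hsdef]; nlinarith
  · rintro i W ⟨z0, hz0, rfl⟩ W' ⟨z0', hz0', rfl⟩ hne w hw w' hw'
    have hσne : σ (((ℓ z0:ℕ):ℝ)*r) z0 ≠ σ (((ℓ z0':ℕ):ℝ)*r) z0' := by
      intro hcon
      apply hne
      ext z
      simp only [mem_setOf_eq, hcon]
    by_contra hlt
    push_neg at hlt
    obtain ⟨hw1, hw2⟩ := hw
    obtain ⟨hw'1, hw'2⟩ := hw'
    have hll : ℓ w = ℓ w' := by rw [hw1, hw'1]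
    have h1 := hsubkey w w' hll hlt
    have h2 := hsubkey w' w hll.symm (by rwa [dist_comm])
    exact hσne (by rw [← hw2, ← hw'2]; exact subset_antisymm h1 h2)
  · intro z _
    have h1 : 1 ≤ ℓ z := hℓ1 z
    have h2 : ℓ z ≤ n+1 := hℓle z
    refine mem_iUnion.2 ⟨⟨ℓ z - 1, by omega⟩, ?_⟩
    refine ⟨{z' | ℓ z' = (ℓ z - 1)+1 ∧
        σ (((ℓ z':ℕ):ℝ)*r) z' = σ (((ℓ z:ℕ):ℝ)*r) z},
      ⟨z, by simp only [Fin.val_mk]; omega, rfl⟩, ?_⟩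
    exact ⟨by omega, rfl⟩

theorem cap_of_colored {n : ℕ} (h : ColoredDimLE (univ : Set Z) n) : CapacityDimLE Z n := by
  classical
  obtain ⟨c, hc, r0, hr0, H⟩ := h
  refine ⟨3*c+1, by positivity, r0/3, by positivity, ?_⟩
  intro s hs hss
  obtain ⟨𝒲, hdiam, hsep, hcov⟩ := H (3*s) (by positivity) (by linarith)
  refine ⟨⋃ i, 𝒲 i, ?_, ?_, ?_⟩
  · refine subset_antisymm (subset_univ _) ?_
    intro z _
    obtain ⟨T, ⟨i, rfl⟩, W, hW, hzW⟩ := hcov (mem_univ z)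
    exact ⟨W, mem_iUnion.2 ⟨i, hW⟩, hzW⟩
  · intro U hU
    obtain ⟨i, hUi⟩ := mem_iUnion.1 hU
    refine lt_of_le_of_lt (hdiam i U hUi).2 ?_
    rw [ENNReal.ofReal_lt_ofReal_iff (by positivity)]
    nlinarith
  · intro z
    set T : Fin (n+1) → Set (Set Z) := fun i => {U ∈ 𝒲 i | ∃ u ∈ U, dist z u < s} with hT
    have hTss : ∀ i, (T i).Subsingleton := by
      intro i U hU U' hU'
      by_contra hne
      obtain ⟨hUi, u, hu, hzu⟩ := hU
      obtain ⟨hU'i, u', hu', hzu'⟩ := hU'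
      have := hsep i U hUi U' hU'i hne u hu u' hu'
      have := dist_triangle u z u'
      rw [dist_comm u z] at this
      linarith
    have hsub : {U ∈ ⋃ i, 𝒲 i | ∃ u ∈ U, dist z u < s} ⊆
        range (fun i : Fin (n+1) => if h : (T i).Nonempty then h.choose else ∅) := by
      rintro U ⟨hU, hu⟩
      obtain ⟨i, hUi⟩ := mem_iUnion.1 hU
      have hUT : U ∈ T i := ⟨hUi, hu⟩
      refine ⟨i, ?_⟩
      have hne : (T i).Nonempty := ⟨U, hUT⟩
      show (if h : (T i).Nonempty then h.choose else ∅) = U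
      rw [dif_pos hne]
      exact hTss i hne.choose_spec hUT
    refine le_trans (Set.encard_mono hsub) ?_
    rw [← image_univ]
    refine le_trans (Set.encard_image_le _ _) ?_
    rw [Set.encard_univ]
    simp [ENat.card_eq_coe_fintype_card]

theorem colored_of_subtype {S : Set Z} {n : ℕ}
    (h : ColoredDimLE (univ : Set (↥S)) n) : ColoredDimLE S n := by
  obtain ⟨c, hc, r0, hr0, H⟩ := h
  refine ⟨c, hc, r0, hr0, fun r hr hrr => ?_⟩
  obtain ⟨𝒲, hdiam, hsep, hcov⟩ := H r hr hrr
  refine ⟨fun i => (Set.image (Subtype.val : S → Z)) '' 𝒲 i, ?_, ?_, ?_⟩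
  · rintro i W ⟨W0, hW0, rfl⟩
    constructor
    · rintro z ⟨z0, hz0, rfl⟩; exact z0.2
    · rw [show EMetric.diam (Subtype.val '' W0) = EMetric.diam W0 from (isometry_subtype_coe).ediam_image W0]
      exact (hdiam i W0 hW0).2
  · rintro i W ⟨W0, hW0, rfl⟩ W' ⟨W0', hW0', rfl⟩ hne w ⟨w0, hw0, rfl⟩ w' ⟨w0', hw0', rfl⟩
    have hne0 : W0 ≠ W0' := fun h => hne (by rw [h])
    exact hsep i W0 hW0 W0' hW0' hne0 w0 hw0 w0' hw0'
  · intro z hz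
    obtain ⟨T, ⟨i, rfl⟩, W0, hW0, hzW0⟩ := hcov (mem_univ (⟨z, hz⟩ : S))
    exact mem_iUnion.2 ⟨i, ⟨Subtype.val '' W0, ⟨W0, hW0, rfl⟩, ⟨z, hz⟩, hzW0, rfl⟩⟩

theorem colored_iUnion {n : ℕ} :
    ∀ (k : ℕ) (f : Fin k → Set Z), (∀ i, ColoredDimLE (f i) n) →
      ColoredDimLE (⋃ i, f i) n := by
  intro k
  induction k with
  | zero =>
    intro f _
    have : (⋃ i : Fin 0, f i) = (∅ : Set Z) := by simp
    rw [this]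
    exact colored_empty n
  | succ k ih =>
    intro f hf
    have hU : (⋃ i, f i) = f 0 ∪ ⋃ i : Fin k, f i.succ := by
      ext z
      simp only [mem_iUnion, mem_union]
      exact Fin.exists_fin_succ
    rw [hU]
    exact colored_union (hf 0) (ih (fun i => f i.succ) (fun i => hf i.succ))

end CapUnionAux

/-- Finite union theorem for capacity dimension: if `Z` is a finite union of
closed subsets each of capacity dimension at most `n` (with the induced
metric), then `Z` has capacity dimension at most `n`. -/
theorem capdim_finite_union (Z : Type*) [MetricSpace Z] (n k : ℕ)
    (Zi : Fin k → Set Z) (hclosed : ∀ i, IsClosed (Zi i))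
    (hcover : (⋃ i, Zi i) = Set.univ)
    (hdim : ∀ i, CapacityDimLE (Zi i) n) :
    CapacityDimLE Z n := by
  have h1 : ∀ i, CapUnionAux.ColoredDimLE (Zi i) n := fun i =>
    CapUnionAux.colored_of_subtype (CapUnionAux.colored_of_cap (hdim i))
  have h2 := CapUnionAux.colored_iUnion k Zi h1
  rw [hcover] at h2
  exact CapUnionAux.cap_of_colored h2
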